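/- arXiv:1812.10938 — 7 statements merged into one kernel-verified Lean document; each statement's English description precedes it below -/
import Mathlib

section
/- Define ξ₂ : [0,∞) → (0,1] by ξ₂(t) = e^{−t}(1 + t). Then for 2e⁻¹ ≤ t ≤ 1, the inverse satisfies ξ₂⁻¹(t) ≤ √(2 log t⁻¹ + 10 (log t⁻¹)^{3/2}), and for 0 < t ≤ 2e⁻¹, ξ₂⁻¹(t) ≤ log t⁻¹ + log(1 + 4 log t⁻¹). -/
noncomputable def xi₂ (t : ℝ) : ℝ := Real.exp (-t) * (1 + t)

lemma cubic_log {x : ℝ} (hx : 0 ≤ x) : Real.log (1 + x) ≤ x - x^2/2 + x^3/3 := by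
  set f : ℝ → ℝ := fun y => y - y^2/2 + y^3/3 - Real.log (1 + y) with hf
  have key : ∀ y : ℝ, 0 < y → HasDerivAt f (1 - y + y^2 - (1+y)⁻¹) y := by
    intro y hy
    have h1 : HasDerivAt (fun y : ℝ => Real.log (1 + y)) ((1+y)⁻¹) y := by
      have := (Real.hasDerivAt_log (by linarith : (1:ℝ)+y ≠ 0)).comp y
        ((hasDerivAt_id y).const_add 1)
      rw [mul_one] at this; exact this
    have h2 : HasDerivAt (fun y : ℝ => y - y^2/2 + y^3/3) (1 - y + y^2) y := by
      have := (((hasDerivAt_id y).sub (((hasDerivAt_pow 2 y)).div_const 2)).add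
        (((hasDerivAt_pow 3 y)).div_const 3))
      exact this.congr_deriv (by ring)
    exact h2.sub h1
  have hmono : MonotoneOn f (Set.Ici (0:ℝ)) := by
    apply monotoneOn_of_deriv_nonneg (convex_Ici 0)
    · apply ContinuousOn.sub
      · fun_prop
      · apply ContinuousOn.log (by fun_prop)
        intro y hy
        have : (0:ℝ) ≤ y := hy
        exact ne_of_gt (by linarith)
    · intro y hy
      rw [interior_Ici] at hy
      exact (key y hy).differentiableAt.differentiableWithinAt
    · intro y hy
      rw [interior_Ici] at hy
      have hy0 : 0 < y := hy
      rw [(key y hy0).deriv]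
      have hy1 : (0:ℝ) < 1 + y := by linarith
      rw [sub_nonneg, inv_le_iff_one_le_mul₀ hy1]
      nlinarith [pow_pos hy0 3]
  have h0 : f 0 = 0 := by simp [hf]
  have := hmono (Set.mem_Ici.2 le_rfl) (Set.mem_Ici.2 hx) hx
  rw [h0] at this
  simp only [hf] at this
  linarith

lemma log_le_mul_log_two {x : ℝ} (hx : 1 ≤ x) : Real.log (1 + x) ≤ x * Real.log 2 := by
  have h : 1 + x ≤ (2:ℝ) ^ x := by
    have := one_add_mul_self_le_rpow_one_add (by norm_num : (-1:ℝ) ≤ 1) hx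
    norm_num at this
    exact this
  calc Real.log (1 + x) ≤ Real.log ((2:ℝ) ^ x) :=
        Real.log_le_log (by linarith) h
    _ = x * Real.log 2 := Real.log_rpow (by norm_num) x

theorem stmt4 (t x : ℝ) (hx : 0 ≤ x) (hxt : xi₂ x = t) :
    (2 / Real.exp 1 ≤ t → t ≤ 1 →
      x ≤ Real.sqrt (2 * Real.log t⁻¹ + 10 * Real.log t⁻¹ ^ ((3:ℝ)/2))) ∧
    (0 < t → t ≤ 2 / Real.exp 1 →
      x ≤ Real.log t⁻¹ + Real.log (1 + 4 * Real.log t⁻¹)) := by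
  have hx1 : (0:ℝ) < 1 + x := by linarith
  have ht0 : 0 < t := by
    rw [← hxt]; exact mul_pos (Real.exp_pos _) hx1
  have hlogt : Real.log t⁻¹ = x - Real.log (1 + x) := by
    rw [Real.log_inv, ← hxt, xi₂, Real.log_mul (Real.exp_ne_zero _) (ne_of_gt hx1),
      Real.log_exp]
    ring
  set z : ℝ := x - Real.log (1 + x) with hzdef
  have hlog_le : Real.log (1 + x) ≤ x := by
    have := Real.log_le_sub_one_of_pos hx1
    linarith
  have hz0 : 0 ≤ z := by rw [hzdef]; linarith
  constructor
  · intro h1 _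
    have hxle1 : x ≤ 1 := by
      by_contra hgt
      push_neg at hgt
      have hA : x < Real.exp (x - 1) := by
        have := Real.add_one_lt_exp (show x - 1 ≠ 0 by intro h; linarith)
        linarith
      have h1' : 2 / Real.exp 1 ≤ Real.exp (-x) * (1 + x) := by
        rw [← hxt] at h1; simpa [xi₂] using h1
      rw [div_le_iff₀ (Real.exp_pos 1)] at h1'
      have h' : 2 ≤ Real.exp (1 - x) * (1 + x) := by
        calc 2 ≤ Real.exp (-x) * (1+x) * Real.exp 1 := h1'
          _ = Real.exp (1-x) * (1+x) := by
              rw [mul_right_comm, ← Real.exp_add]; ring_nf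
      have hEx : Real.exp (1 - x) * Real.exp (x - 1) = 1 := by
        rw [← Real.exp_add]; norm_num
      nlinarith [Real.exp_pos (1-x), Real.exp_pos (x-1),
        mul_le_mul_of_nonneg_right h' (Real.exp_pos (x-1)).le]
    have hzq : x^2/2 - x^3/3 ≤ z := by
      have := cubic_log hx
      rw [hzdef]; linarith
    have hz6 : x^2/6 ≤ z := by nlinarith
    have h32 : z ^ ((3:ℝ)/2) = Real.sqrt (z^3) := by
      rw [Real.sqrt_eq_rpow, ← Real.rpow_natCast z 3, ← Real.rpow_mul hz0]
      norm_num
    have hs : x^3/15 ≤ Real.sqrt (z^3) := by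
      rw [show x^3/15 = Real.sqrt ((x^3/15)^2) from (Real.sqrt_sq (by positivity)).symm]
      apply Real.sqrt_le_sqrt
      nlinarith [pow_le_pow_left₀ (by positivity : (0:ℝ) ≤ x^2/6) hz6 3]
    rw [hlogt]
    rw [Real.le_sqrt hx (by rw [h32]; positivity)]
    rw [h32]
    nlinarith
  · intro _ h2
    have hxge1 : 1 ≤ x := by
      by_contra hlt
      push_neg at hlt
      have hB : 2 - x < Real.exp (1 - x) := by
        have := Real.add_one_lt_exp (show 1 - x ≠ 0 by intro h; linarith)
        linarith
      have h2' : Real.exp (-x) * (1 + x) ≤ 2 / Real.exp 1 := by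
        rw [← hxt] at h2; simpa [xi₂] using h2
      rw [le_div_iff₀ (Real.exp_pos 1)] at h2'
      have h' : Real.exp (1 - x) * (1 + x) ≤ 2 := by
        calc Real.exp (1-x) * (1+x) = Real.exp (-x) * (1+x) * Real.exp 1 := by
              rw [mul_right_comm, ← Real.exp_add]; ring_nf
          _ ≤ 2 := h2'
      nlinarith [Real.exp_pos (1 - x)]
    have hlog2 : Real.log (1 + x) ≤ x * Real.log 2 := log_le_mul_log_two hxge1
    have hl2 : Real.log 2 < 0.6931471808 := Real.log_two_lt_d9
    have h4z : x ≤ 4 * z := by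
      rw [hzdef]
      nlinarith
    rw [hlogt]
    have hlg : Real.log (1 + x) ≤ Real.log (1 + 4 * z) :=
      Real.log_le_log hx1 (by linarith)
    rw [hzdef]
    linarith
end

section
/- Let μ be a non-atomic probability measure on ℝ with finite first moment, and Y a random variable with law μ. Fix t ∈ ℝ with t > E[Y], and let a ∈ (0,∞) satisfy ∫_{t − a⁻¹}^{∞} (x − t) dμ(x) = 0. Define φ_a(x) = max{0, a(x − t) + 1}. Then E[φ_a(Y)] / φ_a(t) = P{Y > t − a⁻¹}, and for every nonnegative convex function φ : ℝ → ℝ that is strictly increasing on [t,∞) with φ(t) ≠ 0, one has E[φ_a(Y)]/φ_a(t) ≤ E[φ(Y)]/φ(t). -/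
open Set MeasureTheory

noncomputable def phia (a t x : ℝ) : ℝ := max 0 (a * (x - t) + 1)

/-- Existence of a subgradient at `t` for a convex function on `ℝ`. -/
lemma exists_subgrad (φ : ℝ → ℝ) (hconv : ConvexOn ℝ univ φ) (t : ℝ) :
    ∃ c : ℝ, ∀ x, φ t + c * (x - t) ≤ φ x := by
  have hmono := hconv.slope_mono (mem_univ t)
  have hmem : ∀ y : ℝ, y ≠ t → y ∈ univ \ {t} := by
    intro y hy; exact ⟨mem_univ y, by simpa using hy⟩
  set S : Set ℝ := slope φ t '' Ioi t with hS
  have hne : S.Nonempty := ⟨slope φ t (t + 1), ⟨t + 1, by simp, rfl⟩⟩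
  have hbdd : BddBelow S := by
    refine ⟨slope φ t (t - 1), ?_⟩
    rintro z ⟨y, hy, rfl⟩
    exact hmono (hmem _ (by linarith)) (hmem _ (by intro h; simp at hy; linarith [hy, h.symm ▸ hy]))
      (by linarith [mem_Ioi.mp hy])
  refine ⟨sInf S, fun x => ?_⟩
  have hslope : ∀ y : ℝ, y ≠ t → slope φ t y * (y - t) = φ y - φ t := by
    intro y hy
    rw [slope_def_field, div_mul_cancel₀]
    exact sub_ne_zero.mpr hy
  rcases lt_trichotomy x t with h | h | h
  · have hle : slope φ t x ≤ sInf S := by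
      refine le_csInf hne ?_
      rintro z ⟨y, hy, rfl⟩
      exact hmono (hmem _ (ne_of_lt h)) (hmem _ (ne_of_gt (mem_Ioi.mp hy)))
        (le_of_lt (lt_trans h (mem_Ioi.mp hy)))
    have := mul_le_mul_of_nonpos_right hle (by linarith : x - t ≤ 0)
    rw [hslope x (ne_of_lt h)] at this
    linarith
  · simp [h]
  · have hle : sInf S ≤ slope φ t x := csInf_le hbdd ⟨x, mem_Ioi.mpr h, rfl⟩
    have := mul_le_mul_of_nonneg_right hle (by linarith : (0:ℝ) ≤ x - t)
    rw [hslope x (ne_of_gt h)] at this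
    linarith

theorem stmt7 (μ : Measure ℝ) [IsProbabilityMeasure μ] (hna : ∀ x : ℝ, μ {x} = 0)
    (hint : Integrable (fun x => x) μ) (t : ℝ) (ht : ∫ x, x ∂μ < t)
    (a : ℝ) (ha : 0 < a) (haeq : ∫ x in Ici (t - a⁻¹), (x - t) ∂μ = 0) :
    (∫⁻ x, ENNReal.ofReal (phia a t x) ∂μ) / ENNReal.ofReal (phia a t t)
        = μ (Ioi (t - a⁻¹)) ∧
      ∀ φ : ℝ → ℝ, ConvexOn ℝ univ φ → (∀ x, 0 ≤ φ x) → StrictMonoOn φ (Ici t) →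
        φ t ≠ 0 →
        (∫⁻ x, ENNReal.ofReal (phia a t x) ∂μ) / ENNReal.ofReal (phia a t t)
          ≤ (∫⁻ x, ENNReal.ofReal (φ x) ∂μ) / ENNReal.ofReal (φ t) := by
  have : NullSingletonClass μ := ⟨hna⟩
  set s : ℝ := t - a⁻¹ with hs
  -- phia at t is 1
  have h1 : phia a t t = 1 := by simp [phia]
  -- phia as an indicator
  have hind : ∀ x : ℝ, phia a t x = (Ici s).indicator (fun x => a * (x - t) + 1) x := by
    intro x
    by_cases hx : s ≤ x
    · rw [indicator_of_mem (mem_Ici.mpr hx)]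
      have : (0:ℝ) ≤ a * (x - t) + 1 := by
        have : a * (s - t) + 1 = 0 := by
          rw [hs]; field_simp; ring
        nlinarith [mul_le_mul_of_nonneg_left (by linarith : s - t ≤ x - t) ha.le]
      exact max_eq_right this
    · rw [indicator_of_notMem (fun h => hx (mem_Ici.mp h))]
      push_neg at hx
      have : a * (x - t) + 1 < 0 := by
        have h0 : a * (s - t) + 1 = 0 := by rw [hs]; field_simp; ring
        nlinarith [mul_lt_mul_of_pos_left (by linarith : x - t < s - t) ha]
      exact max_eq_left this.le
  -- integrability facts
  have hxt : Integrable (fun x : ℝ => x - t) μ := hint.sub (integrable_const t)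
  have hlin : Integrable (fun x : ℝ => a * (x - t) + 1) μ :=
    (hxt.const_mul a).add (integrable_const 1)
  have hphia_int : Integrable (fun x => phia a t x) μ := by
    have : (fun x => phia a t x) = (Ici s).indicator (fun x => a * (x - t) + 1) :=
      funext hind
    rw [this]
    exact hlin.indicator measurableSet_Ici
  have hphia_nn : ∀ x, 0 ≤ phia a t x := fun x => le_max_left _ _
  -- the Bochner integral of phia
  have hIphia : ∫ x, phia a t x ∂μ = (μ (Ici s)).toReal := by
    rw [funext hind, integral_indicator measurableSet_Ici]
    have : ∫ x in Ici s, (a * (x - t) + 1) ∂μ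
        = a * ∫ x in Ici s, (x - t) ∂μ + ∫ x in Ici s, (1:ℝ) ∂μ := by
      rw [integral_add ((hxt.restrict).const_mul a) (integrable_const 1),
        integral_const_mul]
    rw [this, haeq]
    simp
    rfl
  -- the lintegral of phia
  have hLphia : (∫⁻ x, ENNReal.ofReal (phia a t x) ∂μ) = μ (Ici s) := by
    rw [← ofReal_integral_eq_lintegral_ofReal hphia_int
      (Filter.Eventually.of_forall hphia_nn), hIphia,
      ENNReal.ofReal_toReal (measure_ne_top μ _)]
  have hIciIoi : μ (Ici s) = μ (Ioi s) := (measure_congr (Ioi_ae_eq_Ici (a := s))).symm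
  have hLHS : (∫⁻ x, ENNReal.ofReal (phia a t x) ∂μ) / ENNReal.ofReal (phia a t t)
      = μ (Ioi s) := by
    rw [h1, ENNReal.ofReal_one, div_one, hLphia, hIciIoi]
  refine ⟨hLHS, ?_⟩
  intro φ hconv hpos hmono hne
  rw [hLHS]
  have hφt : 0 < φ t := lt_of_le_of_ne (hpos t) (Ne.symm hne)
  obtain ⟨c, hc⟩ := exists_subgrad φ hconv t
  -- the minorant g
  set g : ℝ → ℝ := fun x =>
    φ t * phia a t x + (c - φ t * a) * (Ici s).indicator (fun y => y - t) x with hg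
  have hg_le : ∀ x, g x ≤ φ x := by
    intro x
    by_cases hx : s ≤ x
    · have h1' : phia a t x = a * (x - t) + 1 := by
        rw [hind x, indicator_of_mem (mem_Ici.mpr hx)]
      have h2' : (Ici s).indicator (fun y => y - t) x = x - t := indicator_of_mem (mem_Ici.mpr hx) _
      have := hc x
      simp only [hg, h1', h2']
      nlinarith
    · have h1' : phia a t x = 0 := by rw [hind x, indicator_of_notMem (fun h => hx (mem_Ici.mp h))]
      have h2' : (Ici s).indicator (fun y => y - t) x = 0 := indicator_of_notMem (fun h => hx (mem_Ici.mp h)) _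
      simp only [hg, h1', h2', mul_zero, add_zero, zero_add]
      exact hpos x
  have hg_int : Integrable g μ :=
    (hphia_int.const_mul (φ t)).add
      ((hxt.indicator measurableSet_Ici).const_mul (c - φ t * a))
  have hIg : ∫ x, g x ∂μ = φ t * (μ (Ici s)).toReal := by
    rw [hg]
    rw [integral_add (hphia_int.const_mul (φ t))
      ((hxt.indicator measurableSet_Ici).const_mul (c - φ t * a)),
      integral_const_mul, integral_const_mul, hIphia,
      integral_indicator measurableSet_Ici, haeq, mul_zero, add_zero]
  -- continuity hence measurability of φ
  have hφcont : Continuous φ := by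
    have := hconv.continuousOn isOpen_univ
    rw [← continuousOn_univ]
    simpa using this
  by_cases hfin : (∫⁻ x, ENNReal.ofReal (φ x) ∂μ) = ⊤
  · rw [hfin, ENNReal.top_div_of_ne_top (ENNReal.ofReal_ne_top)]
    exact le_top
  · have hφ_int : Integrable φ μ := by
      refine ⟨hφcont.aestronglyMeasurable, ?_⟩
      rw [hasFiniteIntegral_iff_ofReal (Filter.Eventually.of_forall hpos)]
      exact lt_top_iff_ne_top.mpr hfin
    have hIφ : (∫⁻ x, ENNReal.ofReal (φ x) ∂μ) = ENNReal.ofReal (∫ x, φ x ∂μ) :=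
      (ofReal_integral_eq_lintegral_ofReal hφ_int
        (Filter.Eventually.of_forall hpos)).symm
    have hle : φ t * (μ (Ici s)).toReal ≤ ∫ x, φ x ∂μ := by
      rw [← hIg]
      exact integral_mono hg_int hφ_int hg_le
    rw [hIφ, ENNReal.le_div_iff_mul_le
      (Or.inl (by simpa using hφt : ENNReal.ofReal (φ t) ≠ 0))
      (Or.inl ENNReal.ofReal_ne_top)]
    calc μ (Ioi s) * ENNReal.ofReal (φ t)
        = ENNReal.ofReal ((μ (Ici s)).toReal) * ENNReal.ofReal (φ t) := by
          rw [← hIciIoi, ENNReal.ofReal_toReal (measure_ne_top μ _)]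
      _ = ENNReal.ofReal ((μ (Ici s)).toReal * φ t) :=
          (ENNReal.ofReal_mul ENNReal.toReal_nonneg).symm
      _ ≤ ENNReal.ofReal (∫ x, φ x ∂μ) := ENNReal.ofReal_le_ofReal (by linarith)
end

section
/- Let n ∈ ℕ and let K ⊆ ℝⁿ have the property that there exists a ∈ [−∞,∞]ⁿ such that whenever x ∈ K and y ∈ ℝⁿ has every coordinate yᵢ between aᵢ and xᵢ (non-strictly), then y ∈ K. Then for all x, y ∈ K there exists z ∈ K such that the segments [x,z] and [z,y] are contained in K and |x − z| + |z − y| ≤ √2 |x − y| (Euclidean norm). In particular K is polygonally connected with connectivity parameter 𝔏(K) ≤ √2. -/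
open Set

lemma auxw (b : EReal) (u v : ℝ) :
    ∃ w : ℝ,
      ((b ≤ (w : EReal) ∧ (w : EReal) ≤ (u : EReal)) ∨ ((u : EReal) ≤ (w : EReal) ∧ (w : EReal) ≤ b)) ∧
      ((b ≤ (w : EReal) ∧ (w : EReal) ≤ (v : EReal)) ∨ ((v : EReal) ≤ (w : EReal) ∧ (w : EReal) ≤ b)) ∧
      (u - w) * (v - w) ≤ 0 ∧
      (∀ p : ℝ, min u w ≤ p → p ≤ max u w →
        ((b ≤ (p : EReal) ∧ (p : EReal) ≤ (u : EReal)) ∨ ((u : EReal) ≤ (p : EReal) ∧ (p : EReal) ≤ b))) ∧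
      (∀ p : ℝ, min v w ≤ p → p ≤ max v w →
        ((b ≤ (p : EReal) ∧ (p : EReal) ≤ (v : EReal)) ∨ ((v : EReal) ≤ (p : EReal) ∧ (p : EReal) ≤ b))) := by
  rcases le_or_gt b ((min u v : ℝ) : EReal) with h1 | h1
  · refine ⟨min u v, ?_, ?_, ?_, ?_, ?_⟩
    · exact Or.inl ⟨h1, by exact_mod_cast min_le_left u v⟩
    · exact Or.inl ⟨h1, by exact_mod_cast min_le_right u v⟩
    · rcases min_cases u v with ⟨he, _⟩ | ⟨he, _⟩ <;> rw [he] <;> nlinarith [min_le_left u v, min_le_right u v]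
    · intro p hp1 hp2
      rw [min_eq_right (min_le_left u v)] at hp1
      rw [max_eq_left (min_le_left u v)] at hp2
      exact Or.inl ⟨le_trans h1 (by exact_mod_cast hp1), by exact_mod_cast hp2⟩
    · intro p hp1 hp2
      rw [min_eq_right (min_le_right u v)] at hp1
      rw [max_eq_left (min_le_right u v)] at hp2
      exact Or.inl ⟨le_trans h1 (by exact_mod_cast hp1), by exact_mod_cast hp2⟩
  · rcases le_or_gt ((max u v : ℝ) : EReal) b with h2 | h2
    · refine ⟨max u v, ?_, ?_, ?_, ?_, ?_⟩
      · exact Or.inr ⟨by exact_mod_cast le_max_left u v, h2⟩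
      · exact Or.inr ⟨by exact_mod_cast le_max_right u v, h2⟩
      · rcases max_cases u v with ⟨he, _⟩ | ⟨he, _⟩ <;> rw [he] <;> nlinarith [le_max_left u v, le_max_right u v]
      · intro p hp1 hp2
        rw [min_eq_left (le_max_left u v)] at hp1
        rw [max_eq_right (le_max_left u v)] at hp2
        exact Or.inr ⟨by exact_mod_cast hp1, le_trans (by exact_mod_cast hp2) h2⟩
      · intro p hp1 hp2
        rw [min_eq_left (le_max_right u v)] at hp1
        rw [max_eq_right (le_max_right u v)] at hp2
        exact Or.inr ⟨by exact_mod_cast hp1, le_trans (by exact_mod_cast hp2) h2⟩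
    · have hbot : b ≠ ⊥ := ne_bot_of_gt h1
      have htop : b ≠ ⊤ := ne_top_of_lt h2
      set w := b.toReal with hw
      have hbw : b = (w : EReal) := (EReal.coe_toReal htop hbot).symm
      rw [hbw] at h1 h2 ⊢
      have h1' : min u v < w := by exact_mod_cast h1
      have h2' : w < max u v := by exact_mod_cast h2
      rcases le_total u v with h | h
      · have hu : u < w := (min_eq_left h ▸ h1' : u < w)
        have hv : w < v := (max_eq_right h ▸ h2' : w < v)
        refine ⟨w, Or.inr ⟨by exact_mod_cast hu.le, le_rfl⟩, Or.inl ⟨le_rfl, by exact_mod_cast hv.le⟩,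
          by nlinarith, ?_, ?_⟩
        · intro p hp1 hp2
          rw [min_eq_left hu.le] at hp1
          rw [max_eq_right hu.le] at hp2
          exact Or.inr ⟨by exact_mod_cast hp1, by exact_mod_cast hp2⟩
        · intro p hp1 hp2
          rw [min_eq_right hv.le] at hp1
          rw [max_eq_left hv.le] at hp2
          exact Or.inl ⟨by exact_mod_cast hp1, by exact_mod_cast hp2⟩
      · have hv : v < w := (min_eq_right h ▸ h1' : v < w)
        have hu : w < u := (max_eq_left h ▸ h2' : w < u)
        refine ⟨w, Or.inl ⟨le_rfl, by exact_mod_cast hu.le⟩, Or.inr ⟨by exact_mod_cast hv.le, le_rfl⟩,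
          by nlinarith, ?_, ?_⟩
        · intro p hp1 hp2
          rw [min_eq_right hu.le] at hp1
          rw [max_eq_left hu.le] at hp2
          exact Or.inl ⟨by exact_mod_cast hp1, by exact_mod_cast hp2⟩
        · intro p hp1 hp2
          rw [min_eq_left hv.le] at hp1
          rw [max_eq_right hv.le] at hp2
          exact Or.inr ⟨by exact_mod_cast hp1, by exact_mod_cast hp2⟩

theorem stmt9 (n : ℕ) (K : Set (EuclideanSpace ℝ (Fin n))) (a : Fin n → EReal)
    (hK : ∀ x ∈ K, ∀ y : EuclideanSpace ℝ (Fin n),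
      (∀ i, (a i ≤ (y i : EReal) ∧ (y i : EReal) ≤ (x i : EReal)) ∨
        ((x i : EReal) ≤ (y i : EReal) ∧ (y i : EReal) ≤ a i)) → y ∈ K) :
    ∀ x ∈ K, ∀ y ∈ K, ∃ z ∈ K, segment ℝ x z ⊆ K ∧ segment ℝ z y ⊆ K ∧
      dist x z + dist z y ≤ Real.sqrt 2 * dist x y := by
  intro x hx y hy
  choose w hw1 hw2 hw3 hw4 hw5 using fun i => auxw (a i) (x i) (y i)
  set z : EuclideanSpace ℝ (Fin n) := (WithLp.equiv 2 _).symm w with hz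
  have hzi : ∀ i, z i = w i := fun i => rfl
  have hzK : z ∈ K := hK x hx z (fun i => by rw [hzi]; exact hw1 i)
  refine ⟨z, hzK, ?_, ?_, ?_⟩
  · rintro p ⟨c, d, hc, hd, hcd, rfl⟩
    refine hK x hx _ (fun i => ?_)
    have hpi : (c • x + d • z) i = c * x i + d * w i := by
      simp [hzi, PiLp.add_apply, PiLp.smul_apply, smul_eq_mul]
    rw [hpi]
    refine hw4 i _ ?_ ?_
    · have h5 := add_le_add (mul_le_mul_of_nonneg_left (min_le_left (x i) (w i)) hc)
        (mul_le_mul_of_nonneg_left (min_le_right (x i) (w i)) hd)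
      linarith [h5, (by rw [← add_mul, hcd, one_mul] :
        c * min (x i) (w i) + d * min (x i) (w i) = min (x i) (w i))]
    · have h5 := add_le_add (mul_le_mul_of_nonneg_left (le_max_left (x i) (w i)) hc)
        (mul_le_mul_of_nonneg_left (le_max_right (x i) (w i)) hd)
      linarith [h5, (by rw [← add_mul, hcd, one_mul] :
        c * max (x i) (w i) + d * max (x i) (w i) = max (x i) (w i))]
  · rintro p ⟨c, d, hc, hd, hcd, rfl⟩
    refine hK y hy _ (fun i => ?_)
    have hpi : (c • z + d • y) i = c * w i + d * y i := by
      simp [hzi, PiLp.add_apply, PiLp.smul_apply, smul_eq_mul]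
    rw [hpi]
    refine hw5 i _ ?_ ?_
    · have h5 := add_le_add (mul_le_mul_of_nonneg_left (min_le_right (y i) (w i)) hc)
        (mul_le_mul_of_nonneg_left (min_le_left (y i) (w i)) hd)
      linarith [h5, (by rw [← add_mul, hcd, one_mul] :
        c * min (y i) (w i) + d * min (y i) (w i) = min (y i) (w i))]
    · have h5 := add_le_add (mul_le_mul_of_nonneg_left (le_max_right (y i) (w i)) hc)
        (mul_le_mul_of_nonneg_left (le_max_left (y i) (w i)) hd)
      linarith [h5, (by rw [← add_mul, hcd, one_mul] :
        c * max (y i) (w i) + d * max (y i) (w i) = max (y i) (w i))]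
  · have hd1 : dist x z = Real.sqrt (∑ i, (x i - w i) ^ 2) := by
      rw [EuclideanSpace.dist_eq]; congr 1; apply Finset.sum_congr rfl; intro i _
      rw [hzi, Real.dist_eq, sq_abs]
    have hd2 : dist z y = Real.sqrt (∑ i, (w i - y i) ^ 2) := by
      rw [EuclideanSpace.dist_eq]; congr 1; apply Finset.sum_congr rfl; intro i _
      rw [hzi, Real.dist_eq, sq_abs]
    have hd3 : dist x y = Real.sqrt (∑ i, (x i - y i) ^ 2) := by
      rw [EuclideanSpace.dist_eq]; congr 1; apply Finset.sum_congr rfl; intro i _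
      rw [Real.dist_eq, sq_abs]
    have hsum : (∑ i, (x i - w i) ^ 2) + (∑ i, (w i - y i) ^ 2) ≤ ∑ i, (x i - y i) ^ 2 := by
      rw [← Finset.sum_add_distrib]
      apply Finset.sum_le_sum
      intro i _
      nlinarith [hw3 i]
    have h1 : dist x z ^ 2 = ∑ i, (x i - w i) ^ 2 := by
      rw [hd1, Real.sq_sqrt (Finset.sum_nonneg fun i _ => sq_nonneg _)]
    have h2 : dist z y ^ 2 = ∑ i, (w i - y i) ^ 2 := by
      rw [hd2, Real.sq_sqrt (Finset.sum_nonneg fun i _ => sq_nonneg _)]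
    have h3 : dist x y ^ 2 = ∑ i, (x i - y i) ^ 2 := by
      rw [hd3, Real.sq_sqrt (Finset.sum_nonneg fun i _ => sq_nonneg _)]
    have key : (dist x z + dist z y) ^ 2 ≤ (Real.sqrt 2 * dist x y) ^ 2 := by
      rw [mul_pow, Real.sq_sqrt (by norm_num : (2:ℝ) ≥ 0)]
      nlinarith [h1, h2, h3, hsum, sq_nonneg (dist x z - dist z y), dist_nonneg (x := x) (y := z), dist_nonneg (x := z) (y := y)]
    have hnn : 0 ≤ Real.sqrt 2 * dist x y := mul_nonneg (Real.sqrt_nonneg 2) dist_nonneg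
    nlinarith [key, hnn, add_nonneg (dist_nonneg (x := x) (y := z)) (dist_nonneg (x := z) (y := y))]
end

section
/- Let A ⊆ ℝⁿ be polygonally connected with at least two points and 𝔏(A) < ∞. Then for any function f : A → ℝ, the global Lipschitz constant of f satisfies Lip(f) ≤ 𝔏(A) · sup{ Lip(f, x) : x ∈ A }, where Lip(f, x) is the local Lipschitz constant of f at x. -/
open Set

lemma seg_lip {E : Type*} [NormedAddCommGroup E] [NormedSpace ℝ E]
    (A : Set E) (f : E → ℝ) (K' : ℝ) (hK' : 0 < K')
    (a b : E) (hs : segment ℝ a b ⊆ A)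
    (hloc : ∀ x ∈ segment ℝ a b, ∃ ε > (0:ℝ),
      ∀ y ∈ Metric.ball x ε ∩ A, ∀ z ∈ Metric.ball x ε ∩ A,
        |f y - f z| ≤ K' * dist y z) :
    |f a - f b| ≤ K' * dist a b := by
  classical
  set S := segment ℝ a b with hS
  have hc : ∀ p : S, ∃ ε > (0:ℝ),
      ∀ y ∈ Metric.ball (p:E) ε ∩ A, ∀ z ∈ Metric.ball (p:E) ε ∩ A,
        |f y - f z| ≤ K' * dist y z := fun p => hloc p p.2
  choose ε hε hspec using hc
  have hcomp : IsCompact S := by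
    rw [hS, segment_eq_image']
    exact isCompact_Icc.image (by fun_prop)
  have hcover : S ⊆ ⋃ p : S, Metric.ball (p:E) (ε p) := fun x hx =>
    mem_iUnion.2 ⟨⟨x, hx⟩, Metric.mem_ball_self (hε ⟨x, hx⟩)⟩
  obtain ⟨δ, hδ, hleb⟩ := lebesgue_number_lemma_of_metric hcomp
    (fun p : S => Metric.isOpen_ball) hcover
  obtain ⟨m, hm⟩ := exists_nat_gt (dist a b / δ)
  have hm0 : 0 < (m:ℝ) := lt_of_le_of_lt (div_nonneg dist_nonneg hδ.le) hm
  set p : ℕ → E := fun i => a + ((i:ℝ)/m) • (b - a) with hp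
  have hmem : ∀ i ≤ m, p i ∈ S := by
    intro i hi
    rw [hS, segment_eq_image']
    exact ⟨(i:ℝ)/m, ⟨div_nonneg (Nat.cast_nonneg i) hm0.le,
      div_le_one_of_le₀ (by exact_mod_cast hi) hm0.le⟩, rfl⟩
  have hstep : ∀ i : ℕ, dist (p i) (p (i+1)) = dist a b / m := by
    intro i
    have h1 : p i - p (i+1) = (((i:ℝ)/m - ((i:ℝ)+1)/m)) • (b - a) := by
      simp only [hp, Nat.cast_add, Nat.cast_one]; module
    have habs : |(i:ℝ)/m - ((i:ℝ)+1)/m| = 1/m := by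
      rw [div_sub_div_same, show (i:ℝ) - ((i:ℝ)+1) = -1 by ring, abs_div, abs_neg, abs_one,
        abs_of_pos hm0]
    rw [dist_eq_norm, h1, norm_smul, Real.norm_eq_abs, habs, dist_eq_norm, norm_sub_rev a b]
    ring
  have hstepδ : dist a b / m < δ := by
    rw [div_lt_iff₀ hm0]
    calc dist a b = (dist a b / δ) * δ := by field_simp
    _ < m * δ := by exact mul_lt_mul_of_pos_right hm hδ
    _ = δ * m := by ring
  have key : ∀ i < m, dist (f (p i)) (f (p (i+1))) ≤ K' * (dist a b / m) := by
    intro i hi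
    obtain ⟨q, hq⟩ := hleb (p i) (hmem i hi.le)
    have h1 : p i ∈ Metric.ball (q:E) (ε q) ∩ A :=
      ⟨hq (Metric.mem_ball_self hδ), hs (hmem i hi.le)⟩
    have h2 : p (i+1) ∈ Metric.ball (q:E) (ε q) ∩ A := by
      refine ⟨hq ?_, hs (hmem (i+1) hi)⟩
      rw [Metric.mem_ball, dist_comm, hstep i]
      exact hstepδ
    have := hspec q _ h1 _ h2
    rw [Real.dist_eq, ← hstep i]
    exact this
  calc |f a - f b| = dist (f (p 0)) (f (p m)) := by
        simp [Real.dist_eq, hp, hm0.ne']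
    _ ≤ ∑ i ∈ Finset.range m, dist (f (p i)) (f (p (i+1))) :=
        dist_le_range_sum_dist (fun i => f (p i)) m
    _ ≤ ∑ i ∈ Finset.range m, K' * (dist a b / m) := by
        apply Finset.sum_le_sum
        intro i hi
        exact key i (Finset.mem_range.1 hi)
    _ = K' * dist a b := by
        rw [Finset.sum_const, Finset.card_range, nsmul_eq_mul]
        field_simp

theorem stmt11 (n : ℕ) (A : Set (EuclideanSpace ℝ (Fin n)))
    (f : EuclideanSpace ℝ (Fin n) → ℝ) (L K : ℝ) (hL : 1 ≤ L) (hK : 0 ≤ K)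
    (hpath : ∀ x ∈ A, ∀ y ∈ A, ∀ η > (0:ℝ),
      ∃ (N : ℕ) (u : ℕ → EuclideanSpace ℝ (Fin n)),
        u 0 = x ∧ u N = y ∧ (∀ i < N, segment ℝ (u i) (u (i+1)) ⊆ A) ∧
        ∑ i ∈ Finset.range N, dist (u i) (u (i+1)) ≤ L * dist x y + η)
    (hloc : ∀ x ∈ A, ∀ K' > K, ∃ ε > (0:ℝ),
      ∀ y ∈ Metric.ball x ε ∩ A, ∀ z ∈ Metric.ball x ε ∩ A,
        |f y - f z| ≤ K' * dist y z) :
    ∀ x ∈ A, ∀ y ∈ A, |f x - f y| ≤ L * K * dist x y := by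
  intro x hx y hy
  have hL0 : 0 < L := lt_of_lt_of_le one_pos hL
  have main : ∀ K' > K, ∀ η > (0:ℝ), |f x - f y| ≤ K' * (L * dist x y + η) := by
    intro K' hK' η hη
    have hK'0 : 0 < K' := lt_of_le_of_lt hK hK'
    obtain ⟨N, u, hu0, huN, hseg, hlen⟩ := hpath x hx y hy η hη
    calc |f x - f y| = dist (f (u 0)) (f (u N)) := by rw [hu0, huN, Real.dist_eq]
      _ ≤ ∑ i ∈ Finset.range N, dist (f (u i)) (f (u (i+1))) :=
        dist_le_range_sum_dist (fun i => f (u i)) N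
      _ ≤ ∑ i ∈ Finset.range N, K' * dist (u i) (u (i+1)) := by
        apply Finset.sum_le_sum
        intro i hi
        rw [Real.dist_eq]
        apply seg_lip A f K' hK'0 _ _ (hseg i (Finset.mem_range.1 hi))
        intro z hz
        exact hloc z (hseg i (Finset.mem_range.1 hi) hz) K' hK'
      _ = K' * ∑ i ∈ Finset.range N, dist (u i) (u (i+1)) := by rw [Finset.mul_sum]
      _ ≤ K' * (L * dist x y + η) := by
        apply mul_le_mul_of_nonneg_left hlen hK'0.le
  -- take limits
  have step1 : ∀ K' > K, |f x - f y| ≤ K' * (L * dist x y) := by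
    intro K' hK'
    have hK'0 : 0 < K' := lt_of_le_of_lt hK hK'
    apply le_of_forall_pos_le_add
    intro ε hε
    have := main K' hK' (ε / K') (div_pos hε hK'0)
    calc |f x - f y| ≤ K' * (L * dist x y + ε / K') := this
      _ = K' * (L * dist x y) + ε := by field_simp
  apply le_of_forall_pos_le_add
  intro ε hε
  by_cases hd : dist x y = 0
  · have := step1 (K+1) (by linarith)
    rw [hd] at this ⊢
    simpa using this.trans (by linarith)
  · have hd0 : 0 < dist x y := lt_of_le_of_ne dist_nonneg (Ne.symm hd)
    have hpos : 0 < ε / (L * dist x y) := div_pos hε (mul_pos hL0 hd0)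
    have := step1 (K + ε / (L * dist x y)) (by linarith)
    calc |f x - f y| ≤ (K + ε / (L * dist x y)) * (L * dist x y) := this
      _ = L * K * dist x y + ε := by field_simp
end

section
/- Let 0 < q < ∞ and let Y be a random vector in ℝⁿ with density dμ/dx = (2Γ(1 + 1/q))^{−n} exp(−∑ᵢ |xᵢ|^q), and let W be an independent standard exponential random variable. Then the random vector X = Y / (W + ∑ᵢ |Yᵢ|^q)^{1/q} is uniformly distributed in the unit ball B_qⁿ = { x ∈ ℝⁿ : ∑ᵢ |xᵢ|^q ≤ 1 }. -/
open MeasureTheory ProbabilityTheory Set Pointwise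
open scoped ENNReal

namespace Stmt12Aux

noncomputable def rho (n : ℕ) (q : ℝ) (y : Fin n → ℝ) : ℝ := ∑ i, |y i| ^ q

lemma rho_nonneg {n : ℕ} {q : ℝ} (y : Fin n → ℝ) : 0 ≤ rho n q y :=
  Finset.sum_nonneg fun _ _ => Real.rpow_nonneg (abs_nonneg _) q

lemma rho_meas {n : ℕ} {q : ℝ} (hq : 0 < q) : Measurable (rho n q) := by
  unfold rho
  exact (continuous_finset_sum _ fun i _ =>
    (Real.continuous_rpow_const hq.le).comp ((continuous_apply i).abs)).measurable

lemma rho_smul {n : ℕ} {q : ℝ} (hq : 0 < q) {c : ℝ} (hc : 0 ≤ c) (y : Fin n → ℝ) :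
    rho n q (c • y) = c ^ q * rho n q y := by
  unfold rho
  rw [Finset.mul_sum]
  refine Finset.sum_congr rfl fun i _ => ?_
  rw [Pi.smul_apply, smul_eq_mul, abs_mul, Real.mul_rpow (abs_nonneg _) (abs_nonneg _),
    abs_of_nonneg hc]

lemma smul_set_eq {n : ℕ} {q : ℝ} (hq : 0 < q) {t : ℝ} (ht : 0 < t) (A : Set (Fin n → ℝ)) :
    {y : Fin n → ℝ | rho n q y ≤ t ∧ (fun i => y i / t ^ (1/q)) ∈ A}
      = (t ^ (1/q)) • (A ∩ {x | rho n q x ≤ 1}) := by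
  set r : ℝ := t ^ (1/q) with hr
  have hrpos : 0 < r := Real.rpow_pos_of_pos ht _
  have hrq : r ^ q = t := by
    rw [hr, ← Real.rpow_mul ht.le, one_div_mul_cancel hq.ne', Real.rpow_one]
  ext y
  simp only [mem_setOf_eq, mem_smul_set_iff_inv_smul_mem₀ hrpos.ne', mem_inter_iff]
  have hfun : (fun i => y i / r) = r⁻¹ • y := by
    funext i; simp [div_eq_mul_inv, mul_comm]
  have hrho : rho n q (r⁻¹ • y) = t⁻¹ * rho n q y := by
    rw [rho_smul hq (inv_nonneg.2 hrpos.le), Real.inv_rpow hrpos.le, hrq]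
  rw [hfun, hrho, inv_mul_eq_div, div_le_one ht]
  exact and_comm

lemma vol_eq {n : ℕ} {q : ℝ} (hq : 0 < q) {t : ℝ} (ht : 0 < t) (A : Set (Fin n → ℝ)) :
    volume {y : Fin n → ℝ | rho n q y ≤ t ∧ (fun i => y i / t ^ (1/q)) ∈ A}
      = ENNReal.ofReal (t ^ ((n:ℝ)/q)) * volume (A ∩ {x | rho n q x ≤ 1}) := by
  rw [smul_set_eq hq ht A, Measure.addHaar_smul]
  congr 2
  have hfr : Module.finrank ℝ (Fin n → ℝ) = n := Module.finrank_fin_fun ℝ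
  rw [hfr, abs_of_nonneg (pow_nonneg (Real.rpow_nonneg ht.le _) n),
    ← Real.rpow_natCast (t ^ (1/q)) n, ← Real.rpow_mul ht.le]
  congr 1
  ring

end Stmt12Aux

namespace Stmt12Aux

lemma K_ne_top {n : ℕ} {q : ℝ} (hq : 0 < q) :
    (∫⁻ t in Ioi (0:ℝ), ENNReal.ofReal (Real.exp (-t) * t ^ ((n:ℝ)/q))) ≠ ⊤ := by
  have hint := Real.GammaIntegral_convergent (s := (n:ℝ)/q + 1) (by positivity)
  simp only [add_sub_cancel_right] at hint
  have hfin := hint.2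
  refine ne_of_lt (lt_of_le_of_lt ?_ hfin)
  refine lintegral_mono fun t => ?_
  exact Real.ofReal_le_enorm _

lemma K_ne_zero {n : ℕ} {q : ℝ} (hq : 0 < q) :
    (∫⁻ t in Ioi (0:ℝ), ENNReal.ofReal (Real.exp (-t) * t ^ ((n:ℝ)/q))) ≠ 0 := by
  intro h0
  have hm : Measurable fun t : ℝ => ENNReal.ofReal (Real.exp (-t) * t ^ ((n:ℝ)/q)) :=
    ((Real.measurable_exp.comp measurable_neg).mul
      (Real.continuous_rpow_const (by positivity)).measurable).ennreal_ofReal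
  rw [lintegral_eq_zero_iff hm] at h0
  have hne : volume.restrict (Ioi (0:ℝ)) ≠ 0 := by
    intro h
    have := congrArg (fun μ : Measure ℝ => μ univ) h
    simp [Measure.restrict_apply_univ, Real.volume_Ioi] at this
  haveI := ae_neBot.2 hne
  have h2 : ∀ᵐ t ∂(volume.restrict (Ioi (0:ℝ))), False := by
    filter_upwards [h0, ae_restrict_mem measurableSet_Ioi] with t h1 h2
    have hpos : 0 < Real.exp (-t) * t ^ ((n:ℝ)/q) :=
      mul_pos (Real.exp_pos _) (Real.rpow_pos_of_pos h2 _)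
    simp only [Pi.zero_apply, ENNReal.ofReal_eq_zero] at h1
    exact absurd h1 (not_le.2 hpos)
  obtain ⟨t, ht⟩ := h2.exists
  exact ht

end Stmt12Aux

open Stmt12Aux

set_option maxHeartbeats 2000000 in
theorem stmt12 {Ω : Type*} [MeasurableSpace Ω] (P : Measure Ω) [IsProbabilityMeasure P]
    (n : ℕ) (q : ℝ) (hq : 0 < q)
    (Y : Ω → (Fin n → ℝ)) (W : Ω → ℝ) (hY : Measurable Y) (hW : Measurable W)
    (hindep : IndepFun Y W P)
    (hYlaw : Measure.map Y P = volume.withDensity (fun x =>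
      ENNReal.ofReal ((2 * Real.Gamma (1 + 1/q)) ^ (-(n:ℝ)) *
        Real.exp (-∑ i, |x i| ^ q))))
    (hWlaw : Measure.map W P = volume.withDensity (fun t =>
      ENNReal.ofReal (if 0 ≤ t then Real.exp (-t) else 0)))
    (X : Ω → (Fin n → ℝ))
    (hX : ∀ ω, X ω = fun i => Y ω i / (W ω + ∑ j, |Y ω j| ^ q) ^ (1/q)) :
    Measure.map X P =
      (volume {x : Fin n → ℝ | ∑ i, |x i| ^ q ≤ 1})⁻¹ •
        volume.restrict {x : Fin n → ℝ | ∑ i, |x i| ^ q ≤ 1} := by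
  classical
  have hq1 : (0:ℝ) < 1/q := by positivity
  set c : ℝ := (2 * Real.Gamma (1 + 1/q)) ^ (-(n:ℝ)) with hcdef
  have hΓpos : 0 < 2 * Real.Gamma (1 + 1/q) := by
    have := Real.Gamma_pos_of_pos (show (0:ℝ) < 1 + 1/q by positivity); linarith
  have hcpos : 0 < c := Real.rpow_pos_of_pos hΓpos _
  set B : Set (Fin n → ℝ) := {x | rho n q x ≤ 1} with hBdef
  have hBeq : {x : Fin n → ℝ | ∑ i, |x i| ^ q ≤ 1} = B := rfl
  have hρm : Measurable (rho n q) := rho_meas hq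
  have hBm : MeasurableSet B := measurableSet_le hρm measurable_const
  set T : (Fin n → ℝ) × ℝ → (Fin n → ℝ) :=
    fun p => fun i => p.1 i / (p.2 + rho n q p.1) ^ (1/q) with hTdef
  have hTm : Measurable T := by
    apply measurable_pi_lambda
    intro i
    exact ((measurable_pi_apply i).comp measurable_fst).div
      ((Real.continuous_rpow_const hq1.le).measurable.comp
        (measurable_snd.add (hρm.comp measurable_fst)))
  have hXT : X = T ∘ (fun ω => (Y ω, W ω)) := by
    funext ω; rw [hX ω]; rfl
  have hXm : Measurable X := by rw [hXT]; exact hTm.comp (hY.prodMk hW)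
  haveI hPY : IsProbabilityMeasure (Measure.map Y P) := Measure.isProbabilityMeasure_map hY.aemeasurable
  haveI hPW : IsProbabilityMeasure (Measure.map W P) := Measure.isProbabilityMeasure_map hW.aemeasurable
  have hmapXP : Measure.map X P = Measure.map T ((Measure.map Y P).prod (Measure.map W P)) := by
    rw [← (indepFun_iff_map_prod_eq_prod_map_map hY.aemeasurable hW.aemeasurable).mp hindep,
      Measure.map_map hTm (hY.prodMk hW), hXT]
  set K : ℝ≥0∞ := ∫⁻ t in Ioi (0:ℝ), ENNReal.ofReal (Real.exp (-t) * t ^ ((n:ℝ)/q)) with hKdef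
  have key : ∀ A : Set (Fin n → ℝ), MeasurableSet A →
      Measure.map X P A = (ENNReal.ofReal c * K) * volume (A ∩ B) := by
    intro A hA
    obtain ⟨g, hgdef⟩ : ∃ g' : (Fin n → ℝ) → ℝ → ℝ≥0∞, g' = fun y t =>
        ENNReal.ofReal (if rho n q y ≤ t then Real.exp (rho n q y - t) else 0) *
          A.indicator 1 (fun i => y i / t ^ (1/q)) := ⟨_, rfl⟩
    obtain ⟨J, hJdef⟩ : ∃ J' : (Fin n → ℝ) → ℝ → ℝ≥0∞, J' = fun y t =>
        ENNReal.ofReal c * (ENNReal.ofReal (if rho n q y ≤ t then Real.exp (-t) else 0) *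
          A.indicator 1 (fun i => y i / t ^ (1/q))) := ⟨_, rfl⟩
    have hmap : Measurable fun p : (Fin n → ℝ) × ℝ => (fun i => p.1 i / p.2 ^ (1/q)) :=
      measurable_pi_lambda _ fun i =>
        ((measurable_pi_apply i).comp measurable_fst).div
          ((Real.continuous_rpow_const hq1.le).measurable.comp measurable_snd)
    have hgm : Measurable (Function.uncurry g) := by
      rw [hgdef]
      apply Measurable.mul
      · apply Measurable.ennreal_ofReal
        exact Measurable.ite (measurableSet_le (hρm.comp measurable_fst) measurable_snd)
          (Real.measurable_exp.comp ((hρm.comp measurable_fst).sub measurable_snd))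
          measurable_const
      · exact (measurable_one.indicator hA).comp hmap
    have hJm : Measurable (Function.uncurry J) := by
      rw [hJdef]
      apply Measurable.mul measurable_const
      apply Measurable.mul
      · apply Measurable.ennreal_ofReal
        exact Measurable.ite (measurableSet_le (hρm.comp measurable_fst) measurable_snd)
          (Real.measurable_exp.comp measurable_snd.neg) measurable_const
      · exact (measurable_one.indicator hA).comp hmap
    have hslice : ∀ y : Fin n → ℝ,
        (Measure.map W P) (Prod.mk y ⁻¹' (T ⁻¹' A)) = ∫⁻ t, g y t := by
      intro y
      have hsm : MeasurableSet (Prod.mk y ⁻¹' (T ⁻¹' A)) :=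
        (hTm.comp measurable_prodMk_left) hA
      rw [hWlaw, withDensity_apply _ hsm, ← lintegral_indicator hsm,
        ← lintegral_sub_right_eq_self
          (fun w => (Prod.mk y ⁻¹' (T ⁻¹' A)).indicator
            (fun w' => ENNReal.ofReal (if 0 ≤ w' then Real.exp (-w') else 0)) w) (rho n q y)]
      refine lintegral_congr fun t => ?_
      have hTyt : T (y, t - rho n q y) = fun i => y i / t ^ (1/q) := by
        funext i
        simp only [hTdef]
        rw [sub_add_cancel]
      by_cases hmem : (fun i => y i / t ^ (1/q)) ∈ A
      · have hmem' : (t - rho n q y) ∈ Prod.mk y ⁻¹' (T ⁻¹' A) := by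
          simp only [mem_preimage, hTyt]; exact hmem
        rw [indicator_of_mem hmem', hgdef]
        simp only [indicator_of_mem hmem, Pi.one_apply, mul_one]
        congr 1
        rw [neg_sub]
        exact if_congr sub_nonneg rfl rfl
      · have hmem' : (t - rho n q y) ∉ Prod.mk y ⁻¹' (T ⁻¹' A) := by
          simp only [mem_preimage, hTyt]; exact hmem
        have hg0 : g y t = 0 := by
          rw [hgdef]
          simp only [indicator_of_notMem hmem, mul_zero]
        rw [indicator_of_notMem hmem', hg0]
    have hfYm : Measurable fun x : Fin n → ℝ =>
        ENNReal.ofReal (c * Real.exp (-∑ i, |x i| ^ q)) :=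
      (measurable_const.mul (Real.measurable_exp.comp hρm.neg)).ennreal_ofReal
    have hGm : Measurable fun y => ∫⁻ t, g y t := hgm.lintegral_prod_right
    rw [hmapXP, Measure.map_apply hTm hA, Measure.prod_apply (hTm hA)]
    simp only [hslice]
    rw [hYlaw, lintegral_withDensity_eq_lintegral_mul volume hfYm hGm]
    have hpoint : ∀ y : Fin n → ℝ,
        ((fun x : Fin n → ℝ => ENNReal.ofReal (c * Real.exp (-∑ i, |x i| ^ q))) *
          (fun y => ∫⁻ t, g y t)) y = ∫⁻ t, J y t := by
      intro y
      simp only [Pi.mul_apply]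
      have hgym : Measurable fun t : ℝ => g y t := hgm.comp measurable_prodMk_left
      rw [← lintegral_const_mul _ hgym]
      refine lintegral_congr fun t => ?_
      have hsr : (∑ i, |y i| ^ q) = rho n q y := rfl
      rw [hsr, hgdef, hJdef]
      simp only []
      by_cases hb : rho n q y ≤ t
      · simp only [if_pos hb]
        have harith : c * Real.exp (-(rho n q y)) * Real.exp (rho n q y - t)
            = c * Real.exp (-t) := by
          rw [mul_assoc, ← Real.exp_add, sub_eq_add_neg, neg_add_cancel_left]
        calc ENNReal.ofReal (c * Real.exp (-(rho n q y))) *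
              (ENNReal.ofReal (Real.exp (rho n q y - t)) *
                A.indicator 1 (fun i => y i / t ^ (1/q)))
            = ENNReal.ofReal (c * Real.exp (-(rho n q y)) * Real.exp (rho n q y - t)) *
                A.indicator 1 (fun i => y i / t ^ (1/q)) := by
              rw [← mul_assoc, ← ENNReal.ofReal_mul
                (by positivity : (0:ℝ) ≤ c * Real.exp (-(rho n q y)))]
          _ = ENNReal.ofReal c * (ENNReal.ofReal (Real.exp (-t)) *
                A.indicator 1 (fun i => y i / t ^ (1/q))) := by
              rw [harith, ENNReal.ofReal_mul hcpos.le, mul_assoc]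
      · simp [if_neg hb]
    simp only [hpoint]
    rw [lintegral_lintegral_swap hJm.aemeasurable]
    have hinner : ∀ t : ℝ, (∫⁻ y : Fin n → ℝ, J y t)
        = ENNReal.ofReal c * (ENNReal.ofReal (Real.exp (-t)) *
            volume {y : Fin n → ℝ | rho n q y ≤ t ∧ (fun i => y i / t ^ (1/q)) ∈ A}) := by
      intro t
      have hmapt : Measurable fun y : Fin n → ℝ => (fun i => y i / t ^ (1/q)) :=
        measurable_pi_lambda _ fun i => (measurable_pi_apply i).div_const _
      have hStm : MeasurableSet
          {y : Fin n → ℝ | rho n q y ≤ t ∧ (fun i => y i / t ^ (1/q)) ∈ A} :=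
        (measurableSet_le hρm measurable_const).inter (hmapt hA)
      have hH0ym : Measurable fun y : Fin n → ℝ =>
          ENNReal.ofReal (if rho n q y ≤ t then Real.exp (-t) else 0) *
            A.indicator 1 (fun i => y i / t ^ (1/q)) :=
        ((Measurable.ite (measurableSet_le hρm measurable_const) measurable_const
          measurable_const).ennreal_ofReal).mul ((measurable_one.indicator hA).comp hmapt)
      simp only [hJdef]
      rw [lintegral_const_mul _ hH0ym]
      congr 1
      have hpt : ∀ y : Fin n → ℝ,
          ENNReal.ofReal (if rho n q y ≤ t then Real.exp (-t) else 0) *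
            A.indicator 1 (fun i => y i / t ^ (1/q))
          = {y : Fin n → ℝ | rho n q y ≤ t ∧ (fun i => y i / t ^ (1/q)) ∈ A}.indicator
              (fun _ => ENNReal.ofReal (Real.exp (-t))) y := by
        intro y
        by_cases h1 : rho n q y ≤ t <;> by_cases h2 : (fun i => y i / t ^ (1/q)) ∈ A <;>
          simp [indicator, h1, h2]
      rw [lintegral_congr hpt, lintegral_indicator hStm, setLIntegral_const]
    have hfm : Measurable fun t : ℝ => ENNReal.ofReal (Real.exp (-t) * t ^ ((n:ℝ)/q)) :=
      ((Real.measurable_exp.comp measurable_neg).mul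
        (Real.continuous_rpow_const (by positivity)).measurable).ennreal_ofReal
    have hae : (fun t : ℝ => ∫⁻ y : Fin n → ℝ, J y t) =ᵐ[volume]
        (Ioi (0:ℝ)).indicator (fun t => ENNReal.ofReal c *
          (ENNReal.ofReal (Real.exp (-t) * t ^ ((n:ℝ)/q)) * volume (A ∩ B))) := by
      have h0 : ∀ᵐ t : ℝ, t ≠ (0:ℝ) := by
        rw [ae_iff]
        simp only [ne_eq, not_not, setOf_eq_eq_singleton]
        exact Real.volume_singleton
      filter_upwards [h0] with t ht0
      rcases ht0.lt_or_gt with htneg | htpos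
      · rw [hinner t]
        have hempty : {y : Fin n → ℝ | rho n q y ≤ t ∧ (fun i => y i / t ^ (1/q)) ∈ A} = ∅ := by
          ext y
          simp only [mem_setOf_eq, mem_empty_iff_false, iff_false, not_and]
          intro h1
          exact absurd h1 (not_le.2 (lt_of_lt_of_le htneg (rho_nonneg y)))
        rw [hempty, indicator_of_notMem (by simpa using htneg.not_gt : t ∉ Ioi (0:ℝ))]
        simp
      · rw [hinner t, indicator_of_mem (show t ∈ Ioi (0:ℝ) from htpos), vol_eq hq htpos A, ← hBdef,
          ENNReal.ofReal_mul (Real.exp_pos (-t)).le]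
        ring
    rw [lintegral_congr_ae hae, lintegral_indicator measurableSet_Ioi,
      lintegral_const_mul _ (hfm.mul_const _), lintegral_mul_const _ hfm, ← hKdef]
    ring
  have huniv := key univ MeasurableSet.univ
  rw [univ_inter] at huniv
  haveI : IsProbabilityMeasure (Measure.map X P) := Measure.isProbabilityMeasure_map hXm.aemeasurable
  rw [measure_univ] at huniv
  have hC : ENNReal.ofReal c * K = (volume B)⁻¹ :=
    ENNReal.eq_inv_of_mul_eq_one_left huniv.symm
  refine Measure.ext fun A hA => ?_
  rw [key A hA, hC, hBeq, Measure.smul_apply, smul_eq_mul, Measure.restrict_apply hA]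
end

section
/- Let 0 < q < ∞, let Y have density (2Γ(1+1/q))^{−n} exp(−|x|_q^q) on ℝⁿ, and W an independent standard exponential variable; set X = Y/(W + |Y|_q^q)^{1/q}. Then for every t ∈ [0,1), P{ |X|_q ≤ t } = tⁿ. -/
open MeasureTheory ProbabilityTheory Set

lemma aux_integrableOn {q b : ℝ} (hq : 0 < q) (hb : 0 < b) :
    IntegrableOn (fun x : ℝ => Real.exp (-(b * x ^ q))) (Ioi 0) := by
  have h0 : (1:ℝ)/q ≠ 0 := one_div_ne_zero hq.ne'
  rw [← integrableOn_Ioi_comp_rpow_iff' (fun x : ℝ => Real.exp (-(b * x ^ q))) h0]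
  have h1 : IntegrableOn (fun x : ℝ => x ^ ((1:ℝ)/q - 1) * Real.exp (-b * x ^ (1:ℝ)))
      (Ioi 0) :=
    integrableOn_rpow_mul_exp_neg_mul_rpow (by linarith [one_div_pos.mpr hq]) zero_lt_one hb
  refine h1.congr_fun (fun x hx => ?_) measurableSet_Ioi
  have hx0 : (0:ℝ) < x := hx
  rw [smul_eq_mul, ← Real.rpow_mul hx0.le, one_div, inv_mul_cancel₀ hq.ne', Real.rpow_one]
  ring_nf
  rw [Real.rpow_one]

lemma aux_integrable {q b : ℝ} (hq : 0 < q) (hb : 0 < b) :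
    Integrable (fun x : ℝ => Real.exp (-(b * |x| ^ q))) := by
  have h : IntegrableOn (fun x : ℝ => Real.exp (-(b * |x| ^ q))) (Ioi 0) :=
    (aux_integrableOn hq hb).congr_fun
      (fun x hx => by rw [abs_of_pos (show (0:ℝ) < x from hx)]) measurableSet_Ioi
  rw [← integrableOn_univ, ← Set.Iic_union_Ioi (a := (0:ℝ)), integrableOn_union]
  refine ⟨?_, h⟩
  rw [← Measure.map_neg_eq_self (volume : Measure ℝ)]
  have m : MeasurableEmbedding fun x : ℝ => -x := (Homeomorph.neg ℝ).measurableEmbedding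
  rw [m.integrableOn_map_iff]
  simp_rw [Function.comp_def, abs_neg, neg_preimage, neg_Iic, neg_zero]
  exact Iff.mpr integrableOn_Ici_iff_integrableOn_Ioi h

lemma aux_integral {q b : ℝ} (hq : 0 < q) (hb : 0 < b) :
    ∫ x : ℝ, Real.exp (-(b * |x| ^ q)) = b ^ (-1/q) * (2 * Real.Gamma (1/q + 1)) := by
  rw [integral_comp_abs (f := fun x => Real.exp (-(b * x ^ q)))]
  simp_rw [neg_mul_eq_neg_mul]
  rw [integral_exp_neg_mul_rpow hq hb]
  ring

lemma aux_lintegral (n : ℕ) {q b : ℝ} (hq : 0 < q) (hb : 0 < b) :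
    ∫⁻ x : Fin n → ℝ, ENNReal.ofReal (Real.exp (-(b * ∑ i, |x i| ^ q))) =
      ENNReal.ofReal ((b ^ (-1/q) * (2 * Real.Gamma (1/q + 1))) ^ n) := by
  have hfun : ∀ x : Fin n → ℝ,
      Real.exp (-(b * ∑ i, |x i| ^ q)) = ∏ i, Real.exp (-(b * |x i| ^ q)) := by
    intro x
    rw [← Real.exp_sum]
    congr 1
    rw [Finset.mul_sum, ← Finset.sum_neg_distrib]
  simp_rw [hfun]
  have hint : Integrable (fun x : Fin n → ℝ => ∏ i, Real.exp (-(b * |x i| ^ q))) :=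
    Integrable.fintype_prod (𝕜 := ℝ) (fun _ => aux_integrable hq hb)
  rw [← ofReal_integral_eq_lintegral_ofReal hint
    (ae_of_all _ fun x => Finset.prod_nonneg fun i _ => (Real.exp_pos _).le)]
  rw [volume_pi, integral_fintype_prod_eq_pow (ι := Fin n) (fun x : ℝ => Real.exp (-(b * |x| ^ q))),
    aux_integral hq hb, Fintype.card_fin]

theorem stmt13 {Ω : Type*} [MeasurableSpace Ω] (P : Measure Ω) [IsProbabilityMeasure P]
    (n : ℕ) (q : ℝ) (hq : 0 < q)
    (Y : Ω → (Fin n → ℝ)) (W : Ω → ℝ) (hY : Measurable Y) (hW : Measurable W)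
    (hindep : IndepFun Y W P)
    (hYlaw : Measure.map Y P = volume.withDensity (fun x =>
      ENNReal.ofReal ((2 * Real.Gamma (1 + 1/q)) ^ (-(n:ℝ)) *
        Real.exp (-∑ i, |x i| ^ q))))
    (hWlaw : Measure.map W P = volume.withDensity (fun t =>
      ENNReal.ofReal (if 0 ≤ t then Real.exp (-t) else 0)))
    (X : Ω → (Fin n → ℝ))
    (hX : ∀ ω, X ω = fun i => Y ω i / (W ω + ∑ j, |Y ω j| ^ q) ^ (1/q)) :
    ∀ t : ℝ, 0 ≤ t → t < 1 →
      P {ω | (∑ i, |X ω i| ^ q) ^ (1/q) ≤ t} = ENNReal.ofReal (t ^ n) := by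
  intro t ht ht1
  -- trivial case n = 0
  rcases Nat.eq_zero_or_pos n with hn | hn
  · subst hn
    have : {ω | (∑ i : Fin 0, |X ω i| ^ q) ^ (1/q) ≤ t} = univ := by
      ext ω
      simp only [Finset.univ_eq_empty, Finset.sum_empty, mem_setOf_eq, mem_univ, iff_true]
      rw [Real.zero_rpow (one_div_ne_zero hq.ne')]
      exact ht
    rw [this]
    simp
  -- W is a.e. nonnegative
  have hW0 : ∀ᵐ ω ∂P, 0 ≤ W ω := by
    have hnull : P (W ⁻¹' Iio 0) = 0 := by
      rw [← Measure.map_apply hW measurableSet_Iio, hWlaw,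
        withDensity_apply _ measurableSet_Iio]
      rw [setLIntegral_congr_fun measurableSet_Iio
        (fun t' (ht' : t' ∈ Iio (0:ℝ)) => by
          rw [if_neg (not_le.mpr ht'), ENNReal.ofReal_zero])]
      simp
    rw [ae_iff]
    simp only [not_le]
    exact hnull
  have hgnn : ∀ y : Fin n → ℝ, 0 ≤ ∑ j, |y j| ^ q :=
    fun y => Finset.sum_nonneg fun j _ => Real.rpow_nonneg (abs_nonneg _) q
  have hg : Measurable fun y : Fin n → ℝ => ∑ j, |y j| ^ q := by
    measurability
  -- key pointwise sum computation
  have hsum : ∀ ω, 0 ≤ W ω → ∑ i, |X ω i| ^ q =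
      (∑ j, |Y ω j| ^ q) / (W ω + ∑ j, |Y ω j| ^ q) := by
    intro ω hw
    have hs := hgnn (Y ω)
    simp only [hX]
    rcases eq_or_lt_of_le (add_nonneg hw hs) with h0 | hpos
    · rw [← h0]
      have : ∀ i, |Y ω i / (0:ℝ) ^ (1/q)| ^ q = |Y ω i| ^ q / 0 := by
        intro i
        rw [Real.zero_rpow (one_div_ne_zero hq.ne'), div_zero, abs_zero,
          Real.zero_rpow hq.ne', div_zero]
      simp_rw [this, ← Finset.sum_div]
    · have hr : (0:ℝ) ≤ (W ω + ∑ j, |Y ω j| ^ q) ^ (1/q) := Real.rpow_nonneg hpos.le _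
      have hrq : ((W ω + ∑ j, |Y ω j| ^ q) ^ (1/q)) ^ q = W ω + ∑ j, |Y ω j| ^ q := by
        rw [← Real.rpow_mul hpos.le, one_div, inv_mul_cancel₀ hq.ne', Real.rpow_one]
      calc ∑ i, |Y ω i / (W ω + ∑ j, |Y ω j| ^ q) ^ (1/q)| ^ q
          = ∑ i, |Y ω i| ^ q / (W ω + ∑ j, |Y ω j| ^ q) := by
            refine Finset.sum_congr rfl fun i _ => ?_
            rw [abs_div, abs_of_nonneg hr, Real.div_rpow (abs_nonneg _) hr, hrq]
        _ = _ := by rw [← Finset.sum_div]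
  rcases eq_or_lt_of_le ht with rfl | htpos
  -- case t = 0
  · have key0 : ∀ ω, 0 ≤ W ω →
        ((∑ i, |X ω i| ^ q) ^ (1/q) ≤ 0 ↔ (∑ j, |Y ω j| ^ q) = 0) := by
      intro ω hw
      have hs := hgnn (Y ω)
      rw [hsum ω hw]
      have hsd : 0 ≤ (∑ j, |Y ω j| ^ q) / (W ω + ∑ j, |Y ω j| ^ q) :=
        div_nonneg hs (add_nonneg hw hs)
      constructor
      · intro h
        have h0 : ((∑ j, |Y ω j| ^ q) / (W ω + ∑ j, |Y ω j| ^ q)) ^ (1/q) = 0 :=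
          le_antisymm h (Real.rpow_nonneg hsd _)
        have h1 : (∑ j, |Y ω j| ^ q) / (W ω + ∑ j, |Y ω j| ^ q) = 0 := by
          rwa [Real.rpow_eq_zero hsd (one_div_ne_zero hq.ne')] at h0
        rcases div_eq_zero_iff.mp h1 with h2 | h2
        · exact h2
        · linarith
      · intro h
        rw [h, zero_div, Real.zero_rpow (one_div_ne_zero hq.ne')]
    have hAB : P {ω | (∑ i, |X ω i| ^ q) ^ (1/q) ≤ 0}
        = P {ω | (∑ j, |Y ω j| ^ q) = 0} := by
      refine measure_congr (Filter.eventuallyEq_set.mpr ?_)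
      filter_upwards [hW0] with ω hw using key0 ω hw
    rw [hAB]
    have hset : MeasurableSet {y : Fin n → ℝ | (∑ j, |y j| ^ q) = 0} :=
      hg (measurableSet_singleton 0)
    have hzero : {y : Fin n → ℝ | (∑ j, |y j| ^ q) = 0} = {0} := by
      ext y
      simp only [mem_setOf_eq, mem_singleton_iff]
      constructor
      · intro h
        funext i
        have hterm : ∀ j ∈ Finset.univ, (0:ℝ) ≤ |y j| ^ q :=
          fun j _ => Real.rpow_nonneg (abs_nonneg _) q
        have := (Finset.sum_eq_zero_iff_of_nonneg hterm).mp h i (Finset.mem_univ i)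
        have := (Real.rpow_eq_zero (abs_nonneg _) hq.ne').mp this
        simpa [abs_eq_zero] using this
      · intro h
        subst h
        simp [Real.zero_rpow hq.ne']
    have hvol : (volume : Measure (Fin n → ℝ)) {0} = 0 := by
      have : ({0} : Set (Fin n → ℝ)) = Set.pi univ (fun _ => ({0} : Set ℝ)) := by
        rw [Set.univ_pi_singleton]
        rfl
      rw [this, volume_pi_pi]
      simp [Real.volume_singleton, Finset.prod_const, zero_pow hn.ne']
    rw [show {ω | (∑ j, |Y ω j| ^ q) = 0} = Y ⁻¹' {y | (∑ j, |y j| ^ q) = 0} from rfl,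
      ← Measure.map_apply hY hset, hYlaw, withDensity_apply _ hset, hzero,
      setLIntegral_measure_zero _ _ hvol]
    rw [zero_pow hn.ne', ENNReal.ofReal_zero]
  -- case 0 < t < 1
  · set c : ℝ := (1 - t ^ q) / t ^ q with hc_def
    have htq : 0 < t ^ q := Real.rpow_pos_of_pos htpos q
    have htq1 : t ^ q < 1 := Real.rpow_lt_one ht ht1 hq
    have hc : 0 < c := div_pos (by linarith) htq
    have key : ∀ ω, 0 ≤ W ω →
        ((∑ i, |X ω i| ^ q) ^ (1/q) ≤ t ↔ c * (∑ j, |Y ω j| ^ q) ≤ W ω) := by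
      intro ω hw
      have hs := hgnn (Y ω)
      rw [hsum ω hw]
      have hsd : 0 ≤ (∑ j, |Y ω j| ^ q) / (W ω + ∑ j, |Y ω j| ^ q) :=
        div_nonneg hs (add_nonneg hw hs)
      have hid : (((∑ j, |Y ω j| ^ q) / (W ω + ∑ j, |Y ω j| ^ q)) ^ (1/q)) ^ q
          = (∑ j, |Y ω j| ^ q) / (W ω + ∑ j, |Y ω j| ^ q) := by
        rw [← Real.rpow_mul hsd, one_div, inv_mul_cancel₀ hq.ne', Real.rpow_one]
      rcases eq_or_lt_of_le (add_nonneg hw hs) with h0 | hpos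
      · have hs0 : (∑ j, |Y ω j| ^ q) = 0 := by linarith
        have hw0 : W ω = 0 := by linarith
        rw [hs0, hw0, zero_div, Real.zero_rpow (one_div_ne_zero hq.ne'), mul_zero]
        exact ⟨fun _ => le_rfl, fun _ => htpos.le⟩
      · constructor
        · intro h
          have h2 : (∑ j, |Y ω j| ^ q) / (W ω + ∑ j, |Y ω j| ^ q) ≤ t ^ q := by
            rw [← hid]
            exact Real.rpow_le_rpow (Real.rpow_nonneg hsd _) h hq.le
          rw [div_le_iff₀ hpos] at h2
          rw [hc_def, div_mul_eq_mul_div, div_le_iff₀ htq]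
          nlinarith
        · intro h
          have h2 : (∑ j, |Y ω j| ^ q) / (W ω + ∑ j, |Y ω j| ^ q) ≤ t ^ q := by
            rw [div_le_iff₀ hpos]
            rw [hc_def, div_mul_eq_mul_div, div_le_iff₀ htq] at h
            nlinarith
          have h3 := Real.rpow_le_rpow hsd h2 (le_of_lt (one_div_pos.mpr hq))
          rwa [← Real.rpow_mul ht, mul_one_div, div_self hq.ne', Real.rpow_one] at h3
    have hAB : P {ω | (∑ i, |X ω i| ^ q) ^ (1/q) ≤ t}
        = P {ω | c * (∑ j, |Y ω j| ^ q) ≤ W ω} := by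
      refine measure_congr (Filter.eventuallyEq_set.mpr ?_)
      filter_upwards [hW0] with ω hw using key ω hw
    rw [hAB]
    -- tail of the exponential law
    have hWtail : ∀ a : ℝ, 0 ≤ a →
        Measure.map W P (Ici a) = ENNReal.ofReal (Real.exp (-a)) := by
      intro a ha
      rw [hWlaw, withDensity_apply _ measurableSet_Ici]
      rw [setLIntegral_congr_fun measurableSet_Ici
        (fun t' (ht' : t' ∈ Ici a) => by rw [if_pos (ha.trans ht')])]
      rw [← ofReal_integral_eq_lintegral_ofReal]
      · rw [integral_Ici_eq_integral_Ioi, integral_exp_neg_Ioi]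
      · refine Iff.mpr integrableOn_Ici_iff_integrableOn_Ioi ?_
        exact (exp_neg_integrableOn_Ioi a zero_lt_one).congr_fun
          (fun x _ => by dsimp only; rw [neg_mul, one_mul]) measurableSet_Ioi
      · exact ae_of_all _ fun x => (Real.exp_pos _).le
    -- product structure
    have hmap : Measure.map (fun ω => (Y ω, W ω)) P
        = (Measure.map Y P).prod (Measure.map W P) :=
      (indepFun_iff_map_prod_eq_prod_map_map hY.aemeasurable hW.aemeasurable).mp hindep
    have hSmeas : MeasurableSet {p : (Fin n → ℝ) × ℝ | c * (∑ j, |p.1 j| ^ q) ≤ p.2} :=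
      measurableSet_le ((hg.comp measurable_fst).const_mul c) measurable_snd
    have hE : Measurable fun y : Fin n → ℝ =>
        ENNReal.ofReal (Real.exp (-(c * ∑ j, |y j| ^ q))) :=
      ENNReal.measurable_ofReal.comp (Real.measurable_exp.comp (hg.const_mul c).neg)
    have hE' : Measurable fun y : Fin n → ℝ =>
        ENNReal.ofReal (Real.exp (-((1 + c) * ∑ j, |y j| ^ q))) :=
      ENNReal.measurable_ofReal.comp (Real.measurable_exp.comp (hg.const_mul (1+c)).neg)
    have hD : Measurable fun x : Fin n → ℝ =>
        ENNReal.ofReal ((2 * Real.Gamma (1 + 1/q)) ^ (-(n:ℝ)) * Real.exp (-∑ i, |x i| ^ q)) :=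
      ENNReal.measurable_ofReal.comp ((Real.measurable_exp.comp hg.neg).const_mul _)
    have hGpos : 0 < 2 * Real.Gamma (1/q + 1) :=
      mul_pos two_pos (Real.Gamma_pos_of_pos (by positivity))
    have hK : 0 ≤ (2 * Real.Gamma (1 + 1/q)) ^ (-(n:ℝ)) :=
      Real.rpow_nonneg (by rw [add_comm]; exact hGpos.le) _
    have hb1c : 0 < 1 + c := by linarith
    calc P {ω | c * (∑ j, |Y ω j| ^ q) ≤ W ω}
        = Measure.map (fun ω => (Y ω, W ω)) P
            {p : (Fin n → ℝ) × ℝ | c * (∑ j, |p.1 j| ^ q) ≤ p.2} := by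
          rw [Measure.map_apply (hY.prodMk hW) hSmeas]
          rfl
      _ = ∫⁻ y : Fin n → ℝ, Measure.map W P (Ici (c * ∑ j, |y j| ^ q)) ∂(Measure.map Y P) := by
          rw [hmap, Measure.prod_apply hSmeas]
          refine lintegral_congr fun y => ?_
          congr 1
      _ = ∫⁻ y : Fin n → ℝ, ENNReal.ofReal (Real.exp (-(c * ∑ j, |y j| ^ q))) ∂(Measure.map Y P) := by
          refine lintegral_congr fun y => ?_
          rw [hWtail _ (mul_nonneg hc.le (hgnn y))]
      _ = ∫⁻ y : Fin n → ℝ, ENNReal.ofReal ((2 * Real.Gamma (1 + 1/q)) ^ (-(n:ℝ)) *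
            Real.exp (-∑ i, |y i| ^ q)) *
            ENNReal.ofReal (Real.exp (-(c * ∑ j, |y j| ^ q))) ∂volume := by
          rw [hYlaw, lintegral_withDensity_eq_lintegral_mul _ hD hE]
          simp only [Pi.mul_apply]
      _ = ∫⁻ y : Fin n → ℝ, ENNReal.ofReal ((2 * Real.Gamma (1 + 1/q)) ^ (-(n:ℝ))) *
            ENNReal.ofReal (Real.exp (-((1 + c) * ∑ j, |y j| ^ q))) ∂volume := by
          refine lintegral_congr fun y => ?_
          rw [ENNReal.ofReal_mul hK, mul_assoc, ← ENNReal.ofReal_mul (Real.exp_pos _).le,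
            ← Real.exp_add]
          congr 3
          ring
      _ = ENNReal.ofReal ((2 * Real.Gamma (1 + 1/q)) ^ (-(n:ℝ))) *
            ENNReal.ofReal (((1 + c) ^ (-1/q) * (2 * Real.Gamma (1/q + 1))) ^ n) := by
          rw [lintegral_const_mul _ hE', aux_lintegral n hq hb1c]
      _ = ENNReal.ofReal (t ^ n) := by
          have hbval : 1 + c = t ^ (-q) := by
            rw [Real.rpow_neg ht, hc_def]
            field_simp
            ring
          have hbpow : (1 + c) ^ (-1/q) = t := by
            rw [hbval, ← Real.rpow_mul ht]
            rw [show -q * (-1/q) = 1 by field_simp, Real.rpow_one]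
          rw [hbpow, add_comm 1 (1/q)] -- align Gamma arguments? careful
          rw [show ((2:ℝ) * Real.Gamma (1/q + 1)) ^ (-(n:ℝ))
              = ((2 * Real.Gamma (1/q + 1)) ^ n)⁻¹ by
            rw [← Real.rpow_natCast (2 * Real.Gamma (1/q + 1)) n, ← Real.rpow_neg hGpos.le]]
          rw [← ENNReal.ofReal_mul (by positivity)]
          congr 1
          rw [mul_pow]
          field_simp
          ring
end

section
/- Let (γᵢ)₁ⁿ be i.i.d. uniform random variables on (0,1) with order statistics γ₍₁₎ ≤ ⋯ ≤ γ₍ₙ₎. Then for each k and each s > 0 with (k + s√k)/(n+1) < 1, P{ γ₍ₖ₎ ≥ (k + s√k)/(n+1) } ≤ (ξ₂(s/√k))^k, where ξ₂(t) = e^{−t}(1 + t). -/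
open MeasureTheory ProbabilityTheory Set

lemma count_sort_aux {n : ℕ} (f : Fin n → ℝ) (u : ℝ) (k : Fin n) :
    u ≤ f (Tuple.sort f k) ↔ (n - k.1 : ℕ) ≤ (Finset.univ.filter fun i => u ≤ f i).card := by
  classical
  set g : Fin n → ℝ := f ∘ Tuple.sort f with hg
  have hmono : Monotone g := Tuple.monotone_sort f
  have hanti : Antitone (g ∘ Fin.rev) := fun i j hij => hmono (Fin.rev_le_rev.2 hij)
  have h : k.rev < Fintype.card {i // u ≤ (g ∘ Fin.rev) i} ↔ u ≤ (g ∘ Fin.rev) k.rev := by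
    rw [Fintype.card_subtype]; exact Tuple.lt_card_ge_iff_apply_ge_of_antitone (j := k.rev) (a := u) hanti
  have hcard : Fintype.card {i // u ≤ (g ∘ Fin.rev) i}
      = (Finset.univ.filter fun i => u ≤ f i).card := by
    have h1 : Fintype.card {i // u ≤ (g ∘ Fin.rev) i} = Fintype.card {j // u ≤ f j} :=
      Fintype.card_congr (Equiv.subtypeEquiv (Fin.revPerm.trans (Tuple.sort f)) fun i => Iff.rfl)
    rw [h1, Fintype.card_subtype]
  have hkk : (g ∘ Fin.rev) k.rev = f (Tuple.sort f k) := by simp [hg, Fin.rev_rev]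
  rw [hkk, hcard] at h
  rw [← h, Fin.val_rev]
  have := k.isLt
  omega

lemma analytic_aux (n m K : ℕ) (hmK : m + K = n + 1) (t b : ℝ) (ht : 0 < t)
    (hbt : b * (1 + t) ≤ t) (hKt : (K : ℝ) * t = (n + 1) * b) :
    Real.exp (-(Real.log (1 + t)) * m) * ((1 + t) * (1 - b)) ^ n
      ≤ (Real.exp (-t) * (1 + t)) ^ K := by
  have h1t : (0:ℝ) < 1 + t := by linarith
  have hb1 : b < 1 := by nlinarith
  have hexpm : Real.exp (-(Real.log (1 + t)) * m) = ((1 + t) ^ m)⁻¹ := by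
    rw [mul_comm, Real.exp_nat_mul, Real.exp_neg, Real.exp_log h1t, inv_pow]
  have hkey : (1 - b) ^ n ≤ Real.exp (-(t * K)) * (1 + t) := by
    have h1 : (1 - b) ^ n ≤ Real.exp (-b) ^ n := by
      apply pow_le_pow_left₀ (by linarith) (by nlinarith [Real.add_one_le_exp (-b)])
    have h2 : Real.exp (-b) ^ n = Real.exp (-(b * n)) := by
      rw [← Real.exp_nat_mul]; ring_nf
    have h3 : Real.exp b ≤ 1 + t := by
      have hb' : b ≤ t / (1 + t) := by rw [le_div_iff₀ h1t]; linarith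
      have h4 : Real.exp (t / (1 + t)) ≤ 1 + t := by
        have h5 := Real.add_one_le_exp (-(t / (1 + t)))
        have h6 : 1 - t / (1 + t) = 1 / (1 + t) := by field_simp; ring
        have h9 : 1 / (1 + t) ≤ Real.exp (-(t / (1 + t))) := by linarith
        have h8 : Real.exp (t / (1 + t)) * Real.exp (-(t / (1 + t))) = 1 := by
          rw [← Real.exp_add]; ring_nf; exact Real.exp_zero
        have hA : 1 ≤ (1 + t) * Real.exp (-(t / (1 + t))) := by
          have h10 := mul_le_mul_of_nonneg_left h9 h1t.le
          rwa [mul_one_div, div_self h1t.ne'] at h10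
        refine le_of_mul_le_mul_right ?_ (Real.exp_pos (-(t / (1 + t))))
        rw [h8]; exact hA
      exact (Real.exp_le_exp.2 hb').trans h4
    have h9 : -(t * K) = -(b * n) + -b := by nlinarith
    rw [h9, Real.exp_add]
    calc (1 - b) ^ n ≤ Real.exp (-(b * n)) := h1.trans_eq h2
      _ ≤ Real.exp (-(b * n)) * (Real.exp (-b) * (1 + t)) := by
          nlinarith [Real.exp_pos (-(b*n)), Real.exp_pos (-b), Real.exp_pos b,
            mul_le_mul_of_nonneg_left h3 (Real.exp_pos (-b)).le,
            (by rw [← Real.exp_add]; ring_nf; exact Real.exp_zero : Real.exp (-b) * Real.exp b = 1)]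
      _ = Real.exp (-(b * n)) * Real.exp (-b) * (1 + t) := by ring
  have hpow : (0:ℝ) < (1 + t) ^ m := pow_pos h1t m
  rw [hexpm, mul_pow, inv_mul_le_iff₀ hpow]
  have hrhs : (Real.exp (-t) * (1 + t)) ^ K * (1 + t) ^ m
      = Real.exp (-(t * K)) * (1 + t) ^ (n + 1) := by
    rw [mul_pow, ← hmK, pow_add, ← Real.exp_nat_mul]; ring_nf
  rw [mul_comm ((1 + t) ^ m), hrhs, pow_succ']
  calc (1 + t) ^ n * (1 - b) ^ n
      ≤ (1 + t) ^ n * (Real.exp (-(t * K)) * (1 + t)) :=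
        mul_le_mul_of_nonneg_left hkey (pow_nonneg h1t.le n)
    _ = Real.exp (-(t * K)) * ((1 + t) * (1 + t) ^ n) := by ring

theorem stmt19 {Ω : Type*} [MeasurableSpace Ω] (P : Measure Ω) [IsProbabilityMeasure P]
    (n : ℕ) (γ : Fin n → Ω → ℝ) (hmeas : ∀ i, Measurable (γ i))
    (hindep : iIndepFun γ P)
    (hunif : ∀ i, Measure.map (γ i) P = volume.restrict (Ioo (0:ℝ) 1))
    (k : Fin n) (s : ℝ) (hs : 0 < s)
    (hlt : ((k.1 + 1 : ℝ) + s * Real.sqrt (k.1 + 1)) / (n + 1) < 1) :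
    P {ω | ((k.1 + 1 : ℝ) + s * Real.sqrt (k.1 + 1)) / (n + 1) ≤
        (fun i => γ i ω) (Tuple.sort (fun i => γ i ω) k)}
      ≤ ENNReal.ofReal
          ((Real.exp (-(s / Real.sqrt (k.1 + 1))) * (1 + s / Real.sqrt (k.1 + 1))) ^ (k.1 + 1)) := by
  classical
  have hn1 : (0:ℝ) < n + 1 := by positivity
  set rK : ℝ := Real.sqrt (k.1 + 1) with hrK
  have hrK0 : 0 < rK := Real.sqrt_pos.2 (by positivity)
  have hrKsq : rK * rK = (k.1 + 1 : ℝ) := Real.mul_self_sqrt (by positivity)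
  set t : ℝ := s / rK with htdef
  have ht : 0 < t := div_pos hs hrK0
  have hsrK : s * rK = (k.1 + 1 : ℝ) * t := by
    rw [htdef]; field_simp; nlinarith [hrKsq]
  set U : ℝ := ((k.1 + 1 : ℝ) + s * rK) / (n + 1) with hUdef
  have hUeq : U = (k.1 + 1 : ℝ) * (1 + t) / (n + 1) := by rw [hUdef, hsrK]; ring
  have hU0 : 0 < U := by rw [hUdef]; positivity
  have hU1 : U < 1 := hlt
  have hKlt : (k.1 + 1 : ℝ) * (1 + t) < n + 1 := by
    have := (div_lt_one hn1).1 (hUeq ▸ hU1)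
    linarith
  -- indicators
  set g : ℝ → ℝ := fun x => if U ≤ x then 1 else 0 with hgdef
  have hgmeas : Measurable g := by
    have : MeasurableSet {x : ℝ | U ≤ x} := measurableSet_Ici
    exact Measurable.ite this measurable_const measurable_const
  set X : Fin n → Ω → ℝ := fun i => g ∘ γ i with hXdef
  have hXmeas : ∀ i, Measurable (X i) := fun i => hgmeas.comp (hmeas i)
  have hXindep : iIndepFun X P :=
    hindep.comp (fun _ => g) (fun _ => hgmeas)
  have hX01 : ∀ i ω, 0 ≤ X i ω ∧ X i ω ≤ 1 := by
    intro i ω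
    simp only [hXdef, hgdef, Function.comp]
    split <;> norm_num
  set S : Ω → ℝ := fun ω => ∑ i, X i ω with hSdef
  have hSmeas : Measurable S := Finset.measurable_sum _ (fun i _ => hXmeas i)
  set lam : ℝ := Real.log (1 + t) with hlamdef
  have hlam0 : 0 ≤ lam := Real.log_nonneg (by linarith)
  have hexplam : Real.exp lam = 1 + t := Real.exp_log (by linarith)
  set ε : ℝ := ((n - k.1 : ℕ) : ℝ) with hεdef
  -- event rewrite
  have hset : {ω | ((k.1 + 1 : ℝ) + s * rK) / (n + 1) ≤
      (fun i => γ i ω) (Tuple.sort (fun i => γ i ω) k)} = {ω | ε ≤ S ω} := by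
    ext ω
    simp only [Set.mem_setOf_eq]
    rw [show ((k.1 + 1 : ℝ) + s * rK) / (n + 1) = U from rfl]
    rw [count_sort_aux (fun i => γ i ω) U k]
    have hsum : S ω = ((Finset.univ.filter fun i => U ≤ γ i ω).card : ℝ) := by
      simp only [hSdef, hXdef, hgdef, Function.comp]
      rw [Finset.sum_boole]
    rw [hεdef, hsum, Nat.cast_le]
  -- integrability
  have hSbound : ∀ ω, ‖Real.exp (lam * S ω)‖ ≤ Real.exp (lam * n) := by
    intro ω
    rw [Real.norm_eq_abs, abs_of_pos (Real.exp_pos _), Real.exp_le_exp]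
    have : S ω ≤ n := by
      rw [hSdef]
      calc ∑ i, X i ω ≤ ∑ _i : Fin n, (1:ℝ) :=
            Finset.sum_le_sum (fun i _ => (hX01 i ω).2)
        _ = n := by simp
    exact mul_le_mul_of_nonneg_left this hlam0
  have hint : Integrable (fun ω => Real.exp (lam * S ω)) P :=
    (integrable_const (Real.exp (lam * n))).mono'
      ((hSmeas.const_mul lam).exp.aestronglyMeasurable) (ae_of_all _ hSbound)
  -- Chernoff
  have hch := measure_ge_le_exp_mul_mgf (μ := P) (X := S) ε hlam0 hint
  -- mgf of single indicator
  have hXint : ∀ i, Integrable (X i) P := by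
    intro i
    have hA : MeasurableSet (γ i ⁻¹' Ici U) := (hmeas i) measurableSet_Ici
    have heq : X i = (γ i ⁻¹' Ici U).indicator (fun _ => (1:ℝ)) := by
      funext ω
      by_cases h : U ≤ γ i ω <;>
        simp [hXdef, hgdef, Function.comp, Set.indicator, h]
    rw [heq]
    exact (integrable_const (1:ℝ)).indicator hA
  have hPA : ∀ i, P (γ i ⁻¹' Ici U) = ENNReal.ofReal (1 - U) := by
    intro i
    rw [← Measure.map_apply (hmeas i) measurableSet_Ici, hunif i,
      Measure.restrict_apply measurableSet_Ici]
    have : Ici U ∩ Ioo (0:ℝ) 1 = Ico U 1 := by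
      ext x
      constructor
      · rintro ⟨h1, _, h3⟩; exact ⟨h1, h3⟩
      · rintro ⟨h1, h2⟩; exact ⟨h1, lt_of_lt_of_le hU0 h1, h2⟩
    rw [this, Real.volume_Ico]
  have hXintegral : ∀ i, ∫ ω, X i ω ∂P = 1 - U := by
    intro i
    have hA : MeasurableSet (γ i ⁻¹' Ici U) := (hmeas i) measurableSet_Ici
    have heq : X i = (γ i ⁻¹' Ici U).indicator (fun _ => (1:ℝ)) := by
      funext ω
      by_cases h : U ≤ γ i ω <;>
        simp [hXdef, hgdef, Function.comp, Set.indicator, h]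
    rw [heq, integral_indicator_const (1:ℝ) hA, measureReal_def, hPA i, smul_eq_mul, mul_one,
      ENNReal.toReal_ofReal (by linarith)]
  have hmgf : ∀ i, mgf (X i) P lam = 1 + t * (1 - U) := by
    intro i
    have heq : (fun ω => Real.exp (lam * X i ω))
        = fun ω => 1 + (Real.exp lam - 1) * X i ω := by
      funext ω
      by_cases h : U ≤ γ i ω
      · simp [hXdef, hgdef, Function.comp, h]
      · simp [hXdef, hgdef, Function.comp, h]
    rw [mgf, heq]
    rw [integral_add (integrable_const 1) ((hXint i).const_mul _)]
    rw [integral_const, integral_const_mul, hXintegral i]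
    simp [hexplam]
  -- mgf of sum
  have hSsum : S = ∑ i, X i := by
    funext ω
    rw [hSdef, Finset.sum_apply]
  have hmgfS : mgf S P lam = (1 + t * (1 - U)) ^ n := by
    rw [hSsum, hXindep.mgf_sum hXmeas]
    simp [hmgf]
  -- analytic bound
  set b : ℝ := (k.1 + 1 : ℝ) * t / (n + 1) with hbdef
  have hfact : 1 + t * (1 - U) = (1 + t) * (1 - b) := by
    rw [hUeq, hbdef]
    field_simp
    ring
  have hbt : b * (1 + t) ≤ t := by
    rw [hbdef, div_mul_eq_mul_div, div_le_iff₀ hn1]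
    nlinarith
  have hKtb : ((k.1 + 1 : ℕ) : ℝ) * t = (n + 1) * b := by
    rw [hbdef]
    push_cast
    field_simp
  have hmcast : ((n - k.1 : ℕ) : ℝ) = ε := rfl
  have hana := analytic_aux n (n - k.1) (k.1 + 1)
    (by have := k.isLt; omega) t b ht hbt hKtb
  have hbound : Real.exp (-lam * ε) * mgf S P lam
      ≤ (Real.exp (-t) * (1 + t)) ^ (k.1 + 1) := by
    rw [hmgfS, hfact]
    calc Real.exp (-lam * ε) * ((1 + t) * (1 - b)) ^ n
        = Real.exp (-(Real.log (1 + t)) * ((n - k.1 : ℕ) : ℝ)) * ((1 + t) * (1 - b)) ^ n := by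
          rw [hmcast, hlamdef]
      _ ≤ (Real.exp (-t) * (1 + t)) ^ (k.1 + 1) := hana
  -- conclude
  rw [hset]
  calc P {ω | ε ≤ S ω} = ENNReal.ofReal (P {ω | ε ≤ S ω}).toReal :=
        (ENNReal.ofReal_toReal (measure_ne_top P _)).symm
    _ ≤ ENNReal.ofReal ((Real.exp (-t) * (1 + t)) ^ (k.1 + 1)) :=
        ENNReal.ofReal_le_ofReal (hch.trans hbound)
    _ = ENNReal.ofReal
          ((Real.exp (-(s / rK)) * (1 + s / rK)) ^ (k.1 + 1)) := by rw [htdef]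
end
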